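/- arXiv:2002.09153 — 7 statements merged into one kernel-verified Lean document; each statement's English description precedes it below -/
import Mathlib

section
/- For an arc-length parametrized curve f with unit tangent τ, the density M₁(f) = ‖τ(s1)−τ(s2)‖²/(2‖Δf‖²) satisfies, for 0 < |s1−s2| (and f embedded so Δf ≠ 0): 2M₁(f) = 2M₀(f) − 2 ∂²X/(∂s1∂s2) + (∂X/∂s1)(∂X/∂s2) + (2/Δs)(∂X/∂s1 − ∂X/∂s2), where M₀(f) = (1 − cos φ)/‖Δf‖² with cos φ = (‖Δf‖²/2)·∂²/(∂s1∂s2) log‖Δf‖², and X = log(|Δs|²/‖Δf‖²). -/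
open Real Filter Topology

/-- The identity `2M₁(f) = 2M₀(f) − 2∂²X/(∂s1∂s2) + (∂X/∂s1)(∂X/∂s2)
  + (2/Δs)(∂X/∂s1 − ∂X/∂s2)` for a `C²` embedded arc-length parametrized curve,
with `X = log(Δs²/‖Δf‖²)` and `cos φ = (‖Δf‖²/2)·∂²/(∂s1∂s2) log‖Δf‖²`. -/
theorem stmt_4 {n : ℕ} (f : ℝ → EuclideanSpace ℝ (Fin n))
    (hf : ContDiff ℝ 2 f) (hunit : ∀ s, ‖deriv f s‖ = 1)
    (s1 s2 : ℝ) (hs : s1 ≠ s2) (hne : f s1 ≠ f s2) :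
    2 * (‖deriv f s1 - deriv f s2‖ ^ 2 / (2 * ‖f s1 - f s2‖ ^ 2))
      = 2 * ((1 - (‖f s1 - f s2‖ ^ 2 / 2) *
            deriv (fun a => deriv (fun b => Real.log (‖f a - f b‖ ^ 2)) s2) s1)
              / ‖f s1 - f s2‖ ^ 2)
        - 2 * deriv (fun a =>
            deriv (fun b => Real.log ((a - b) ^ 2 / ‖f a - f b‖ ^ 2)) s2) s1
        + (deriv (fun a => Real.log ((a - s2) ^ 2 / ‖f a - f s2‖ ^ 2)) s1)
          * (deriv (fun b => Real.log ((s1 - b) ^ 2 / ‖f s1 - f b‖ ^ 2)) s2)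
        + (2 / (s1 - s2)) *
            ((deriv (fun a => Real.log ((a - s2) ^ 2 / ‖f a - f s2‖ ^ 2)) s1)
              - (deriv (fun b => Real.log ((s1 - b) ^ 2 / ‖f s1 - f b‖ ^ 2)) s2)) := by
  have hdiff : Differentiable ℝ f := hf.differentiable (by norm_num)
  have hd : ∀ x, HasDerivAt f (deriv f x) x := fun x => (hdiff x).hasDerivAt
  -- derivative of t ↦ ‖f a - f t‖² at b
  have hB : ∀ a b : ℝ, HasDerivAt (fun t => ‖f a - f t‖ ^ 2)
      (-2 * (inner ℝ (f a - f b) (deriv f b) : ℝ)) b := by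
    intro a b
    have h0 : HasDerivAt (fun t => f a - f t) (-deriv f b) b := (hd b).const_sub (f a)
    have h1 := h0.inner ℝ h0
    have h2 : (inner ℝ (f a - f b) (-deriv f b) : ℝ) + inner ℝ (-deriv f b) (f a - f b)
        = -2 * inner ℝ (f a - f b) (deriv f b) := by
      rw [inner_neg_right, inner_neg_left, real_inner_comm (deriv f b)]; ring
    rw [h2] at h1
    simpa only [real_inner_self_eq_norm_sq] using h1
  -- derivative of t ↦ ‖f t - f b‖² at a
  have hA : ∀ a b : ℝ, HasDerivAt (fun t => ‖f t - f b‖ ^ 2)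
      (2 * (inner ℝ (f a - f b) (deriv f a) : ℝ)) a := by
    intro a b
    have h0 : HasDerivAt (fun t => f t - f b) (deriv f a) a := (hd a).sub_const (f b)
    have h1 := h0.inner ℝ h0
    have h2 : (inner ℝ (f a - f b) (deriv f a) : ℝ) + inner ℝ (deriv f a) (f a - f b)
        = 2 * inner ℝ (f a - f b) (deriv f a) := by
      rw [real_inner_comm (deriv f a)]; ring
    rw [h2] at h1
    simpa only [real_inner_self_eq_norm_sq] using h1
  have hnz : ∀ a b : ℝ, f a ≠ f b → ‖f a - f b‖ ^ 2 ≠ 0 := by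
    intro a b h
    have := norm_pos_iff.mpr (sub_ne_zero.mpr h)
    positivity
  -- derivative of b ↦ log ‖f a - f b‖² at b, given f a ≠ f b
  have hLB : ∀ a b : ℝ, f a ≠ f b → HasDerivAt (fun t => Real.log (‖f a - f t‖ ^ 2))
      (-2 * (inner ℝ (f a - f b) (deriv f b) : ℝ) / ‖f a - f b‖ ^ 2) b :=
    fun a b h => (hB a b).log (hnz a b h)
  -- derivative of b ↦ log ((a-b)²/‖f a - f b‖²) at b, given a ≠ b, f a ≠ f b
  have hXB : ∀ a b : ℝ, a ≠ b → f a ≠ f b →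
      HasDerivAt (fun t => Real.log ((a - t) ^ 2 / ‖f a - f t‖ ^ 2))
      (-2 / (a - b) + 2 * (inner ℝ (f a - f b) (deriv f b) : ℝ) / ‖f a - f b‖ ^ 2) b := by
    intro a b hab hfab
    have hsub : a - b ≠ 0 := sub_ne_zero.mpr hab
    have h1 : HasDerivAt (fun t => (a - t) ^ 2) (2 * (a - b) * (-1)) b := by
      have := ((hasDerivAt_id b).const_sub a).pow 2
      exact this.congr_deriv (by simp)
    have h2 : HasDerivAt (fun t => Real.log ((a - t) ^ 2)) (-2 / (a - b)) b := by
      have := h1.log (pow_ne_zero 2 hsub)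
      convert this using 1
      field_simp
    have h3 := h2.sub (hLB a b hfab)
    have hev : (fun t => Real.log ((a - t) ^ 2 / ‖f a - f t‖ ^ 2)) =ᶠ[nhds b]
        (fun t => Real.log ((a - t) ^ 2) - Real.log (‖f a - f t‖ ^ 2)) := by
      have e1 : ∀ᶠ t in 𝓝 b, f a ≠ f t :=
        (hdiff.continuous.continuousAt (x := b)).eventually_ne hfab.symm |>.mono
          fun t ht => fun h => ht h.symm
      have e2 : ∀ᶠ t in 𝓝 b, t ≠ a := eventually_ne_nhds (fun h => hab h.symm)
      filter_upwards [e1, e2] with t h1' h2'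
      rw [Real.log_div (pow_ne_zero 2 (sub_ne_zero.mpr fun h => h2' h.symm)) (hnz a t h1')]
    have := h3.congr_of_eventuallyEq hev
    exact this.congr_deriv (by ring)
  -- derivative of a ↦ log ((a-b)²/‖f a - f b‖²) at a
  have hXA : ∀ a b : ℝ, a ≠ b → f a ≠ f b →
      HasDerivAt (fun t => Real.log ((t - b) ^ 2 / ‖f t - f b‖ ^ 2))
      (2 / (a - b) - 2 * (inner ℝ (f a - f b) (deriv f a) : ℝ) / ‖f a - f b‖ ^ 2) a := by
    intro a b hab hfab
    have hsub : a - b ≠ 0 := sub_ne_zero.mpr hab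
    have h1 : HasDerivAt (fun t => (t - b) ^ 2) (2 * (a - b) * 1) a := by
      have := ((hasDerivAt_id a).sub_const b).pow 2
      exact this.congr_deriv (by simp)
    have h2 : HasDerivAt (fun t => Real.log ((t - b) ^ 2)) (2 / (a - b)) a := by
      have := h1.log (pow_ne_zero 2 hsub)
      convert this using 1
      field_simp
    have hA' : HasDerivAt (fun t => Real.log (‖f t - f b‖ ^ 2))
        (2 * (inner ℝ (f a - f b) (deriv f a) : ℝ) / ‖f a - f b‖ ^ 2) a := by
      have := (hA a b).log ?_
      · convert this using 2 <;> simp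
      · simpa using hnz a b hfab
    have h3 := h2.sub hA'
    have hev : (fun t => Real.log ((t - b) ^ 2 / ‖f t - f b‖ ^ 2)) =ᶠ[nhds a]
        (fun t => Real.log ((t - b) ^ 2) - Real.log (‖f t - f b‖ ^ 2)) := by
      have e1 : ∀ᶠ t in 𝓝 a, f t ≠ f b :=
        (hdiff.continuous.continuousAt (x := a)).eventually_ne hfab
      have e2 : ∀ᶠ t in 𝓝 a, t ≠ b := eventually_ne_nhds hab
      filter_upwards [e1, e2] with t h1' h2'
      rw [Real.log_div (pow_ne_zero 2 (sub_ne_zero.mpr h2')) (by simpa using hnz t b h1')]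
    exact h3.congr_of_eventuallyEq hev
  have e1 : ∀ᶠ a in nhds s1, f a ≠ f s2 :=
    (hdiff.continuous.continuousAt (x := s1)).eventually_ne hne
  have e2 : ∀ᶠ a in nhds s1, a ≠ s2 := eventually_ne_nhds hs
  have hgne : ‖f s1 - f s2‖ ^ 2 ≠ 0 := hnz s1 s2 hne
  have hssub : s1 - s2 ≠ 0 := sub_ne_zero.mpr hs
  -- numerator-type derivative: a ↦ inner ℝ (f a - f s2) (deriv f s2)
  have hnum : HasDerivAt (fun a => (inner ℝ (f a - f s2) (deriv f s2) : ℝ))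
      ((inner ℝ (deriv f s1) (deriv f s2) : ℝ)) s1 := by
    have h0 : HasDerivAt (fun a => f a - f s2) (deriv f s1) s1 := (hd s1).sub_const _
    have h1 := h0.inner ℝ (hasDerivAt_const s1 (deriv f s2))
    simpa using h1
  have hden : HasDerivAt (fun a => ‖f a - f s2‖ ^ 2)
      (2 * (inner ℝ (f s1 - f s2) (deriv f s1) : ℝ)) s1 := hA s1 s2
  -- mixed derivative of log ‖f a - f b‖²
  have hML : deriv (fun a => deriv (fun b => Real.log (‖f a - f b‖ ^ 2)) s2) s1
      = ((-2 * (inner ℝ (deriv f s1) (deriv f s2) : ℝ)) * ‖f s1 - f s2‖ ^ 2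
          - (-2 * (inner ℝ (f s1 - f s2) (deriv f s2) : ℝ))
            * (2 * (inner ℝ (f s1 - f s2) (deriv f s1) : ℝ))) / (‖f s1 - f s2‖ ^ 2) ^ 2 := by
    have hevL : (fun a => deriv (fun b => Real.log (‖f a - f b‖ ^ 2)) s2) =ᶠ[nhds s1]
        (fun a => -2 * (inner ℝ (f a - f s2) (deriv f s2) : ℝ) / ‖f a - f s2‖ ^ 2) := by
      filter_upwards [e1] with a ha
      exact (hLB a s2 ha).deriv
    rw [hevL.deriv_eq]
    exact ((hnum.const_mul (-2)).div hden hgne).deriv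
  -- mixed derivative of X
  have hMX : deriv (fun a =>
        deriv (fun b => Real.log ((a - b) ^ 2 / ‖f a - f b‖ ^ 2)) s2) s1
      = 2 / (s1 - s2) ^ 2
        + ((2 * (inner ℝ (deriv f s1) (deriv f s2) : ℝ)) * ‖f s1 - f s2‖ ^ 2
          - (2 * (inner ℝ (f s1 - f s2) (deriv f s2) : ℝ))
            * (2 * (inner ℝ (f s1 - f s2) (deriv f s1) : ℝ))) / (‖f s1 - f s2‖ ^ 2) ^ 2 := by
    have hevX : (fun a => deriv (fun b => Real.log ((a - b) ^ 2 / ‖f a - f b‖ ^ 2)) s2)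
        =ᶠ[nhds s1] (fun a => -2 / (a - s2)
          + 2 * (inner ℝ (f a - f s2) (deriv f s2) : ℝ) / ‖f a - f s2‖ ^ 2) := by
      filter_upwards [e1, e2] with a ha ha2
      exact (hXB a s2 ha2 ha).deriv
    rw [hevX.deriv_eq]
    have hp1 : HasDerivAt (fun a : ℝ => -2 / (a - s2)) (2 / (s1 - s2) ^ 2) s1 := by
      have h0 : HasDerivAt (fun a : ℝ => ((a - s2)⁻¹))
          (-(1) / (s1 - s2) ^ 2) s1 := by
        have := ((hasDerivAt_id s1).sub_const s2).inv hssub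
        exact this.congr_deriv (by simp)
      have := h0.const_mul (-2)
      exact this.congr_deriv (by ring)
    have hp2 := ((hnum.const_mul 2).div hden hgne)
    exact (hp1.add hp2).deriv
  have hDX1 := (hXA s1 s2 hs hne).deriv
  have hDX2 := (hXB s1 s2 hs hne).deriv
  have hL : ‖deriv f s1 - deriv f s2‖ ^ 2
      = 2 - 2 * (inner ℝ (deriv f s1) (deriv f s2) : ℝ) := by
    rw [norm_sub_sq_real, hunit s1, hunit s2]; ring
  rw [hML, hMX, hDX1, hDX2, hL]
  have hn0 : ‖f s1 - f s2‖ ≠ 0 := norm_ne_zero_iff.mpr (sub_ne_zero.mpr hne)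
  field_simp
  ring
end

section
/- For a C² embedded arc-length parametrized curve f, the density M₂(f) = (2/‖Δf‖²)⟨τ(s1)∧(Δf/‖Δf‖), τ(s2)∧(Δf/‖Δf‖)⟩ satisfies 2M₂(f) = −2 ∂²/(∂s1∂s2) log‖Δf‖² − (∂/∂s1 log‖Δf‖²)(∂/∂s2 log‖Δf‖²) for s1 ≠ s2. -/
open scoped RealInnerProductSpace

private lemma inner_sq_hasDerivAt {n : ℕ} {f : ℝ → EuclideanSpace ℝ (Fin n)}
    (hf : Differentiable ℝ f) (c : EuclideanSpace ℝ (Fin n)) (x : ℝ) :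
    HasDerivAt (fun a => ⟪f a - c, f a - c⟫) (2 * ⟪f x - c, deriv f x⟫) x := by
  have h1 : HasDerivAt (fun a => f a - c) (deriv f x) x := (hf x).hasDerivAt.sub_const c
  have := h1.inner ℝ h1
  have e : ⟪f x - c, deriv f x⟫ + ⟪deriv f x, f x - c⟫ = 2 * ⟪f x - c, deriv f x⟫ := by
    rw [real_inner_comm (deriv f x) (f x - c)]
    ring
  rw [e] at this
  exact this

private lemma log_norm_deriv_b {n : ℕ} {f : ℝ → EuclideanSpace ℝ (Fin n)}
    (hf : Differentiable ℝ f) (a : ℝ) {b : ℝ} (h : f a ≠ f b) :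
    HasDerivAt (fun b => Real.log (‖f a - f b‖ ^ 2))
      (-2 * ⟪f a - f b, deriv f b⟫ / ‖f a - f b‖ ^ 2) b := by
  have hne : f a - f b ≠ 0 := sub_ne_zero_of_ne h
  have h1 : HasDerivAt (fun t => f a - f t) (-(deriv f b)) b := (hf b).hasDerivAt.const_sub _
  have h2 := h1.inner ℝ h1
  have hgne : ⟪f a - f b, f a - f b⟫ ≠ 0 := by
    rw [real_inner_self_eq_norm_sq]; exact pow_ne_zero 2 (norm_ne_zero_iff.mpr hne)
  have h3 := h2.log hgne
  have heq : (fun b => Real.log (‖f a - f b‖ ^ 2))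
      = fun b => Real.log ⟪f a - f b, f a - f b⟫ := by
    funext t; rw [real_inner_self_eq_norm_sq]
  rw [heq]
  convert h3 using 1
  rw [real_inner_self_eq_norm_sq]
  simp only [inner_neg_left, inner_neg_right]
  rw [real_inner_comm (deriv f b)]
  ring

private lemma log_norm_deriv_a {n : ℕ} {f : ℝ → EuclideanSpace ℝ (Fin n)}
    (hf : Differentiable ℝ f) {a : ℝ} (b : ℝ) (h : f a ≠ f b) :
    HasDerivAt (fun a => Real.log (‖f a - f b‖ ^ 2))
      (2 * ⟪f a - f b, deriv f a⟫ / ‖f a - f b‖ ^ 2) a := by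
  have hne : f a - f b ≠ 0 := sub_ne_zero_of_ne h
  have h2 := inner_sq_hasDerivAt hf (f b) a
  have hgne : ⟪f a - f b, f a - f b⟫ ≠ 0 := by
    rw [real_inner_self_eq_norm_sq]; exact pow_ne_zero 2 (norm_ne_zero_iff.mpr hne)
  have h3 := h2.log hgne
  have heq : (fun a => Real.log (‖f a - f b‖ ^ 2))
      = fun a => Real.log ⟪f a - f b, f a - f b⟫ := by
    funext t; rw [real_inner_self_eq_norm_sq]
  rw [heq]
  convert h3 using 1
  rw [real_inner_self_eq_norm_sq]

/-- For a `C²` embedded arc-length parametrized curve,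
`2M₂(f) = −2∂²/(∂s1∂s2) log‖Δf‖² − (∂/∂s1 log‖Δf‖²)(∂/∂s2 log‖Δf‖²)`. -/
theorem stmt_6 {n : ℕ} (f : ℝ → EuclideanSpace ℝ (Fin n))
    (hf : ContDiff ℝ 2 f) (hunit : ∀ s, ‖deriv f s‖ = 1)
    (hinj : Function.Injective f) (s1 s2 : ℝ) (hs : s1 ≠ s2) :
    2 * ((2 / ‖f s1 - f s2‖ ^ 2) *
        (⟪deriv f s1, deriv f s2⟫
          - ⟪deriv f s1, ‖f s1 - f s2‖⁻¹ • (f s1 - f s2)⟫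
            * ⟪deriv f s2, ‖f s1 - f s2‖⁻¹ • (f s1 - f s2)⟫))
      = -2 * deriv (fun a => deriv (fun b => Real.log (‖f a - f b‖ ^ 2)) s2) s1
        - (deriv (fun a => Real.log (‖f a - f s2‖ ^ 2)) s1)
          * (deriv (fun b => Real.log (‖f s1 - f b‖ ^ 2)) s2) := by
  have hdf : Differentiable ℝ f := hf.differentiable two_ne_zero
  have hfne : f s1 ≠ f s2 := fun h => hs (hinj h)
  have hne : f s1 - f s2 ≠ 0 := sub_ne_zero_of_ne hfne
  have hr : ‖f s1 - f s2‖ ≠ 0 := norm_ne_zero_iff.mpr hne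
  -- first partials
  have hda := (log_norm_deriv_a hdf s2 hfne).deriv
  have hdb := (log_norm_deriv_b hdf s1 hfne).deriv
  -- mixed partial
  have hmix : deriv (fun a => deriv (fun b => Real.log (‖f a - f b‖ ^ 2)) s2) s1
      = (-2 * ⟪deriv f s1, deriv f s2⟫ * ‖f s1 - f s2‖ ^ 2
          - (-2 * ⟪f s1 - f s2, deriv f s2⟫) * (2 * ⟪f s1 - f s2, deriv f s1⟫))
        / (‖f s1 - f s2‖ ^ 2) ^ 2 := by
    have hev : (fun a => deriv (fun b => Real.log (‖f a - f b‖ ^ 2)) s2)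
        =ᶠ[nhds s1] fun a => -2 * ⟪f a - f s2, deriv f s2⟫ / ‖f a - f s2‖ ^ 2 := by
      filter_upwards [eventually_ne_nhds hs] with a ha
      exact (log_norm_deriv_b hdf a (fun h => ha (hinj h))).deriv
    rw [hev.deriv_eq]
    have hN : HasDerivAt (fun a => -2 * ⟪f a - f s2, deriv f s2⟫)
        (-2 * ⟪deriv f s1, deriv f s2⟫) s1 := by
      have h1 : HasDerivAt (fun a => f a - f s2) (deriv f s1) s1 :=
        (hdf s1).hasDerivAt.sub_const _
      have h2 := h1.inner ℝ (hasDerivAt_const s1 (deriv f s2))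
      have := h2.const_mul (-2 : ℝ)
      simpa using this
    have hD : HasDerivAt (fun a => ‖f a - f s2‖ ^ 2)
        (2 * ⟪f s1 - f s2, deriv f s1⟫) s1 := by
      have := inner_sq_hasDerivAt hdf (f s2) s1
      have heq : (fun a => ‖f a - f s2‖ ^ 2) = fun a => ⟪f a - f s2, f a - f s2⟫ := by
        funext t; rw [real_inner_self_eq_norm_sq]
      rw [heq]; exact this
    have hDne : ‖f s1 - f s2‖ ^ 2 ≠ 0 := pow_ne_zero 2 hr
    exact (hN.div hD hDne).deriv
  rw [hmix, hda, hdb]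
  have hsym1 : ⟪deriv f s1, f s1 - f s2⟫ = ⟪f s1 - f s2, deriv f s1⟫ := real_inner_comm _ _
  have hsym2 : ⟪deriv f s2, f s1 - f s2⟫ = ⟪f s1 - f s2, deriv f s2⟫ := real_inner_comm _ _
  rw [real_inner_smul_right, real_inner_smul_right, hsym1, hsym2]
  field_simp
  ring
end

section
/- For a C² embedded arc-length parametrized curve f, the pointwise decomposition M₀(f) = M₁(f) + M₂(f) holds for s1 ≠ s2, where M₀(f) = (1 − cos φ)/‖Δf‖² with cos φ = (‖Δf‖²/2)·∂²/(∂s1∂s2) log‖Δf‖², M₁(f) = ‖τ(s1)−τ(s2)‖²/(2‖Δf‖²), and M₂(f) = (2/‖Δf‖²)[τ(s1)·τ(s2) − (τ(s1)·Δf)(τ(s2)·Δf)/‖Δf‖²]. -/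
open scoped RealInnerProductSpace

private lemma normsq_hasDerivAt {n : ℕ} {g : ℝ → EuclideanSpace ℝ (Fin n)}
    {v : EuclideanSpace ℝ (Fin n)} {s : ℝ} (hg : HasDerivAt g v s) :
    HasDerivAt (fun b => ‖g b‖ ^ 2) (2 * ⟪g s, v⟫) s := by
  have h := (HasDerivAt.inner ℝ hg hg :
      HasDerivAt (fun t => ⟪g t, g t⟫) (⟪g s, v⟫ + ⟪v, g s⟫) s)
  have heq : (fun t : ℝ => ⟪g t, g t⟫) = fun b => ‖g b‖ ^ 2 := by
    funext b; rw [real_inner_self_eq_norm_sq]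
  rw [heq] at h
  refine h.congr_deriv ?_
  rw [real_inner_comm]; ring

/-- Pointwise decomposition `M₀(f) = M₁(f) + M₂(f)` for a `C²` embedded
arc-length parametrized curve. -/
theorem stmt_7 {n : ℕ} (f : ℝ → EuclideanSpace ℝ (Fin n))
    (hf : ContDiff ℝ 2 f) (hunit : ∀ s, ‖deriv f s‖ = 1)
    (hinj : Function.Injective f) (s1 s2 : ℝ) (hs : s1 ≠ s2) :
    (1 - (‖f s1 - f s2‖ ^ 2 / 2) *
        deriv (fun a => deriv (fun b => Real.log (‖f a - f b‖ ^ 2)) s2) s1)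
          / ‖f s1 - f s2‖ ^ 2
      = ‖deriv f s1 - deriv f s2‖ ^ 2 / (2 * ‖f s1 - f s2‖ ^ 2)
        + (2 / ‖f s1 - f s2‖ ^ 2) *
            (⟪deriv f s1, deriv f s2⟫
              - ⟪deriv f s1, f s1 - f s2⟫ * ⟪deriv f s2, f s1 - f s2⟫
                  / ‖f s1 - f s2‖ ^ 2) := by
  have hd : Differentiable ℝ f := hf.differentiable (by norm_num)
  have hfd : ∀ s, HasDerivAt f (deriv f s) s := fun s => (hd s).hasDerivAt
  have hΔne : ∀ a, a ≠ s2 → f a - f s2 ≠ 0 := fun a ha =>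
    sub_ne_zero.mpr (fun h => ha (hinj h))
  -- Step 1: inner derivative
  have step1 : ∀ a, a ≠ s2 →
      deriv (fun b => Real.log (‖f a - f b‖ ^ 2)) s2
        = -(2 * ⟪f a - f s2, deriv f s2⟫) / ‖f a - f s2‖ ^ 2 := by
    intro a ha
    have hg : HasDerivAt (fun b => f a - f b) (-(deriv f s2)) s2 := by
      exact ((hasDerivAt_const s2 (f a)).sub (hfd s2)).congr_deriv (zero_sub _)
    have hn : HasDerivAt (fun b => ‖f a - f b‖ ^ 2)
        (2 * ⟪f a - f s2, -(deriv f s2)⟫) s2 := normsq_hasDerivAt hg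
    have hne : ‖f a - f s2‖ ^ 2 ≠ 0 :=
      pow_ne_zero _ (norm_ne_zero_iff.mpr (hΔne a ha))
    rw [(hn.log hne).deriv, inner_neg_right]
    ring
  -- eventual equality near s1
  have hev : (fun a => deriv (fun b => Real.log (‖f a - f b‖ ^ 2)) s2)
      =ᶠ[nhds s1] fun a => -(2 * ⟪f a - f s2, deriv f s2⟫) / ‖f a - f s2‖ ^ 2 := by
    filter_upwards [isOpen_compl_singleton.mem_nhds
      (by simpa using hs : s1 ∈ ({s2}ᶜ : Set ℝ))] with a ha
    exact step1 a ha
  have hΔ : f s1 - f s2 ≠ 0 := hΔne s1 hs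
  have hr : (0:ℝ) < ‖f s1 - f s2‖ ^ 2 := pow_pos (norm_pos_iff.mpr hΔ) 2
  set τ1 := deriv f s1 with hτ1
  set τ2 := deriv f s2 with hτ2
  set A := ⟪τ1, τ2⟫ with hA
  set B := ⟪f s1 - f s2, τ1⟫ with hB
  set C := ⟪f s1 - f s2, τ2⟫ with hC
  set r := ‖f s1 - f s2‖ ^ 2 with hrdef
  -- Step 2: outer derivative
  have hg1 : HasDerivAt (fun a => f a - f s2) τ1 s1 := (hfd s1).sub_const (f s2)
  have hnum : HasDerivAt (fun a => -(2 * ⟪f a - f s2, τ2⟫)) (-(2 * A)) s1 := by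
    have h := HasDerivAt.inner ℝ hg1 (hasDerivAt_const s1 τ2)
    simp only [inner_zero_right, zero_add] at h
    exact (h.const_mul (2:ℝ)).neg
  have hden : HasDerivAt (fun a => ‖f a - f s2‖ ^ 2) (2 * B) s1 := normsq_hasDerivAt hg1
  have hdiv := hnum.div hden hr.ne'
  have hD : deriv (fun a => deriv (fun b => Real.log (‖f a - f b‖ ^ 2)) s2) s1
      = (-(2 * A) * r - -(2 * C) * (2 * B)) / r ^ 2 := by
    rw [hev.deriv_eq]
    exact hdiv.deriv
  have hnorm : ‖τ1 - τ2‖ ^ 2 = 2 - 2 * A := by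
    rw [norm_sub_sq_real, hunit, hunit]; rw [hA]; ring
  have hB' : ⟪τ1, f s1 - f s2⟫ = B := real_inner_comm _ _
  have hC' : ⟪τ2, f s1 - f s2⟫ = C := real_inner_comm _ _
  rw [hD, hnorm, hB', hC']
  field_simp
  ring
end

section
/- For a C² embedded arc-length parametrized curve f and for 0 < |s1 − s2| < L/2, the identity 2(M(f) − M₀(f)) = −∂²X/(∂s1∂s2) holds, where M(f) = 1/‖Δf‖² − 1/|Δs|², M₀(f) = (1−cos φ)/‖Δf‖² with cos φ = (‖Δf‖²/2)·∂²/(∂s1∂s2) log‖Δf‖², and X = log(|Δs|²/‖Δf‖²) with Δs = s1 − s2. -/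
open scoped RealInnerProductSpace

private lemma sqnorm_hasDerivAt {n : ℕ} {f : ℝ → EuclideanSpace ℝ (Fin n)}
    (hf : Differentiable ℝ f) (c : EuclideanSpace ℝ (Fin n)) (b : ℝ) :
    HasDerivAt (fun b => ‖c - f b‖ ^ 2) (-2 * ⟪c - f b, deriv f b⟫) b := by
  have h1 : HasDerivAt (fun b => c - f b) (-(deriv f b)) b :=
    ((hf b).hasDerivAt).const_sub c
  have h2 := h1.inner ℝ h1
  have hfun : (fun b => (⟪c - f b, c - f b⟫)) = fun b => ‖c - f b‖ ^ 2 := by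
    funext x; exact real_inner_self_eq_norm_sq _
  rw [hfun] at h2
  refine h2.congr_deriv ?_
  rw [inner_neg_right, inner_neg_left, real_inner_comm]
  ring

private lemma dlog_hasDerivAt {n : ℕ} {f : ℝ → EuclideanSpace ℝ (Fin n)}
    (hf : Differentiable ℝ f) (a b0 : ℝ) (h : f a ≠ f b0) :
    HasDerivAt (fun b => Real.log (‖f a - f b‖ ^ 2))
      (-2 * ⟪f a - f b0, deriv f b0⟫ / ‖f a - f b0‖ ^ 2) b0 := by
  have hne : ‖f a - f b0‖ ^ 2 ≠ 0 :=
    pow_ne_zero _ (norm_ne_zero_iff.mpr (sub_ne_zero.mpr h))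
  exact (sqnorm_hasDerivAt hf (f a) b0).log hne

/-- For a `C²` embedded closed curve of length `L` parametrized by arc length and
`0 < |s1 − s2| < L/2`, one has `2(M(f) − M₀(f)) = −∂²X/(∂s1∂s2)`. -/
theorem stmt_8 {n : ℕ} (f : ℝ → EuclideanSpace ℝ (Fin n)) (L : ℝ) (hL : 0 < L)
    (hf : ContDiff ℝ 2 f) (hunit : ∀ s, ‖deriv f s‖ = 1)
    (hper : ∀ s, f (s + L) = f s)
    (hemb : ∀ a b : ℝ, f a = f b → ∃ k : ℤ, a - b = k * L)
    (s1 s2 : ℝ) (h1 : 0 < |s1 - s2|) (h2 : |s1 - s2| < L / 2) :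
    2 * ((1 / ‖f s1 - f s2‖ ^ 2 - 1 / (s1 - s2) ^ 2)
        - (1 - (‖f s1 - f s2‖ ^ 2 / 2) *
            deriv (fun a => deriv (fun b => Real.log (‖f a - f b‖ ^ 2)) s2) s1)
              / ‖f s1 - f s2‖ ^ 2)
      = - deriv (fun a =>
          deriv (fun b => Real.log ((a - b) ^ 2 / ‖f a - f b‖ ^ 2)) s2) s1 := by
  have hd : Differentiable ℝ f := hf.differentiable two_ne_zero
  -- injectivity on scales < L
  have hne : ∀ a b : ℝ, 0 < |a - b| → |a - b| < L → f a ≠ f b := by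
    intro a b h0 hL' heq
    obtain ⟨k, hk⟩ := hemb a b heq
    have habs : |a - b| = |(k : ℝ)| * L := by rw [hk, abs_mul, abs_of_pos hL]
    have hk0 : k = 0 := by
      by_contra hknz
      have h1k : (1 : ℝ) ≤ |(k : ℝ)| := by
        have := Int.one_le_abs (by exact_mod_cast hknz : k ≠ 0)
        exact_mod_cast this
      nlinarith
    rw [hk0] at hk
    simp at hk
    rw [sub_eq_zero] at hk  -- hk : a = b
    rw [hk] at h0
    simp at h0
  have hLhalf : |s1 - s2| < L := lt_trans h2 (by linarith)
  have hs12 : f s1 ≠ f s2 := hne s1 s2 h1 hLhalf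
  have hs12' : s1 ≠ s2 := by
    intro h; rw [h] at h1; simp at h1
  have hgne : ‖f s1 - f s2‖ ^ 2 ≠ 0 :=
    pow_ne_zero _ (norm_ne_zero_iff.mpr (sub_ne_zero.mpr hs12))
  have hds : s1 - s2 ≠ 0 := sub_ne_zero.mpr hs12'
  -- B : explicit form of inner derivative of log ‖Δf‖²
  set B : ℝ → ℝ := fun a => -2 * ⟪f a - f s2, deriv f s2⟫ / ‖f a - f s2‖ ^ 2 with hB
  have hBeq : ∀ a : ℝ, f a ≠ f s2 →
      deriv (fun b => Real.log (‖f a - f b‖ ^ 2)) s2 = B a := by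
    intro a ha
    exact (dlog_hasDerivAt hd a s2 ha).deriv
  -- B is differentiable at s1
  have hBdiff : DifferentiableAt ℝ B s1 := by
    have hnum : DifferentiableAt ℝ (fun a => ⟪f a - f s2, deriv f s2⟫) s1 :=
      ((hd s1).sub_const (f s2)).inner ℝ (differentiableAt_const _)
    have hden : DifferentiableAt ℝ (fun a => ‖f a - f s2‖ ^ 2) s1 := by
      have : (fun a => ‖f a - f s2‖ ^ 2) = fun a => ⟪f a - f s2, f a - f s2⟫ := by
        funext x; exact (real_inner_self_eq_norm_sq _).symm
      rw [this]
      exact ((hd s1).sub_const (f s2)).inner ℝ ((hd s1).sub_const (f s2))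
    exact ((differentiableAt_const (-2 : ℝ)).mul hnum).div hden hgne
  -- eventually near s1, f a ≠ f s2
  have hev1 : ∀ᶠ a in nhds s1, f a ≠ f s2 :=
    (hd.continuous.continuousAt).eventually_ne hs12
  -- rewrite the LHS mixed derivative
  have hD : deriv (fun a => deriv (fun b => Real.log (‖f a - f b‖ ^ 2)) s2) s1
      = deriv B s1 := by
    apply Filter.EventuallyEq.deriv_eq
    filter_upwards [hev1] with a ha
    exact hBeq a ha
  -- inner derivative of the X-function
  have hG : ∀ a : ℝ, 0 < |a - s2| → |a - s2| < L →
      deriv (fun b => Real.log ((a - b) ^ 2 / ‖f a - f b‖ ^ 2)) s2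
        = -2 / (a - s2) - B a := by
    intro a h0 hLa
    have hfa : f a ≠ f s2 := hne a s2 h0 hLa
    -- eventual splitting of the log
    have hev : ∀ᶠ b in nhds s2, 0 < |a - b| ∧ |a - b| < L := by
      have hc : ContinuousAt (fun b => |a - b|) s2 := by fun_prop
      have := hc.preimage_mem_nhds (Ioo_mem_nhds h0 hLa)
      filter_upwards [this] with b hb
      exact ⟨hb.1, hb.2⟩
    have hsplit : (fun b => Real.log ((a - b) ^ 2 / ‖f a - f b‖ ^ 2))
        =ᶠ[nhds s2] fun b => Real.log ((a - b) ^ 2) - Real.log (‖f a - f b‖ ^ 2) := by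
      filter_upwards [hev] with b hb
      have hab : a - b ≠ 0 := by
        intro h; rw [h] at hb; simp at hb
      have hfb : f a - f b ≠ 0 := sub_ne_zero.mpr (hne a b hb.1 hb.2)
      rw [Real.log_div (pow_ne_zero _ hab) (pow_ne_zero _ (norm_ne_zero_iff.mpr hfb))]
    rw [hsplit.deriv_eq]
    have hab : a - s2 ≠ 0 := by
      intro h; rw [h] at h0; simp at h0
    have h1' : HasDerivAt (fun b : ℝ => (a - b) ^ 2) (2 * (a - s2) ^ 1 * (-1)) s2 :=
      ((hasDerivAt_id s2).const_sub a).pow 2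
    have h1'' : HasDerivAt (fun b : ℝ => Real.log ((a - b) ^ 2))
        ((2 * (a - s2) ^ 1 * (-1)) / (a - s2) ^ 2) s2 :=
      h1'.log (pow_ne_zero _ hab)
    have h2' := dlog_hasDerivAt hd a s2 hfa
    have := (h1''.sub h2').deriv
    erw [this]
    have : (2 * (a - s2) ^ 1 * (-1)) / (a - s2) ^ 2 = -2 / (a - s2) := by
      field_simp
    rw [this]
  -- the outer function agrees near s1 with an explicit one
  have hev2 : ∀ᶠ a in nhds s1, 0 < |a - s2| ∧ |a - s2| < L := by
    have hc : ContinuousAt (fun a => |a - s2|) s1 := by fun_prop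
    have := hc.preimage_mem_nhds (Ioo_mem_nhds h1 hLhalf)
    filter_upwards [this] with a ha
    exact ⟨ha.1, ha.2⟩
  have hGev : (fun a => deriv (fun b => Real.log ((a - b) ^ 2 / ‖f a - f b‖ ^ 2)) s2)
      =ᶠ[nhds s1] fun a => -2 / (a - s2) - B a := by
    filter_upwards [hev2] with a ha
    exact hG a ha.1 ha.2
  -- derivative of the explicit outer function
  have hA : HasDerivAt (fun a : ℝ => -2 / (a - s2)) (2 / (s1 - s2) ^ 2) s1 := by
    have h0 : HasDerivAt (fun a : ℝ => a - s2) 1 s1 := (hasDerivAt_id s1).sub_const s2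
    have h1' : HasDerivAt (fun a : ℝ => (a - s2)⁻¹) (-1 / (s1 - s2) ^ 2) s1 := h0.inv hds
    have h2' := h1'.const_mul (-2 : ℝ)
    have hfun : (fun a : ℝ => -2 * (a - s2)⁻¹) = fun a : ℝ => -2 / (a - s2) := by
      funext x; rw [div_eq_mul_inv]
    rw [hfun] at h2'
    refine h2'.congr_deriv ?_
    ring
  have hRHS : deriv (fun a =>
      deriv (fun b => Real.log ((a - b) ^ 2 / ‖f a - f b‖ ^ 2)) s2) s1
      = 2 / (s1 - s2) ^ 2 - deriv B s1 := by
    rw [hGev.deriv_eq]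
    erw [deriv_sub hA.differentiableAt hBdiff, hA.deriv]
  rw [hD, hRHS]
  have hn0 : ‖f s1 - f s2‖ ≠ 0 := norm_ne_zero_iff.mpr (sub_ne_zero.mpr hs12)
  field_simp
  ring
end

section
/- For an arc-length parametrized closed curve f of total length L with unit tangent τ, for any a ∈ (0, L/2] and any s, one has |Δs|²/‖Δf‖² − 1 ≤ (1/(2‖f(s+a)−f(s)‖²)) ∫ₛ^{s+a} ∫ₛ^{s+a} ‖τ(u) − τ(v)‖² du dv with Δs = a, Δf = f(s+a) − f(s); more precisely a² − ‖f(s+a)−f(s)‖² = (1/2)∫ₛ^{s+a}∫ₛ^{s+a} ‖τ(u)−τ(v)‖² du dv. -/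
open intervalIntegral MeasureTheory


/-- For an arc-length parametrized closed curve of length `L`, for `a ∈ (0, L/2]`,
`a² − ‖f(s+a) − f(s)‖² = (1/2)∫∫ ‖τ(u) − τ(v)‖² du dv`, and consequently
`|Δs|²/‖Δf‖² − 1 ≤ (1/(2‖Δf‖²))∫∫ ‖τ(u) − τ(v)‖² du dv`. -/
theorem stmt_11 {n : ℕ} (f : ℝ → EuclideanSpace ℝ (Fin n)) (L : ℝ) (hL : 0 < L)
    (hf : ContDiff ℝ 1 f) (hunit : ∀ s, ‖deriv f s‖ = 1)
    (hper : ∀ s, f (s + L) = f s)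
    (hemb : ∀ a b : ℝ, f a = f b → ∃ k : ℤ, a - b = k * L)
    (a s : ℝ) (ha0 : 0 < a) (ha1 : a ≤ L / 2) :
    a ^ 2 - ‖f (s + a) - f s‖ ^ 2
        = (1 / 2) * ∫ u in s..(s + a), ∫ v in s..(s + a),
            ‖deriv f u - deriv f v‖ ^ 2 ∧
    a ^ 2 / ‖f (s + a) - f s‖ ^ 2 - 1
        ≤ (1 / (2 * ‖f (s + a) - f s‖ ^ 2)) *
            ∫ u in s..(s + a), ∫ v in s..(s + a), ‖deriv f u - deriv f v‖ ^ 2 := by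
  set τ := deriv f with hτ
  have hd : Differentiable ℝ f := hf.differentiable one_ne_zero
  have hτc : Continuous τ := hf.continuous_deriv le_rfl
  have hτi : ∀ b c : ℝ, IntervalIntegrable τ volume b c :=
    fun b c => hτc.intervalIntegrable b c
  have hΔ : f (s + a) - f s = ∫ u in s..(s + a), τ u := by
    rw [intervalIntegral.integral_deriv_eq_sub (fun x _ => hd x) (hτi s (s + a))]
  set D := f (s + a) - f s with hD
  -- inner computation
  have key : ∀ u : ℝ, (∫ v in s..(s + a), (inner ℝ (τ u) (τ v) : ℝ)) = inner ℝ (τ u) D := by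
    intro u
    rw [hΔ]
    exact (innerSL ℝ (τ u)).intervalIntegral_comp_comm (hτi s (s + a))
  have key2 : (∫ u in s..(s + a), (inner ℝ (τ u) D : ℝ)) = ‖D‖ ^ 2 := by
    calc (∫ u in s..(s + a), (inner ℝ (τ u) D : ℝ))
        = ∫ u in s..(s + a), (innerSL ℝ D) (τ u) := by
          simp only [innerSL_apply_apply]
          exact intervalIntegral.integral_congr fun u _ => real_inner_comm _ _
      _ = (innerSL ℝ D) (∫ u in s..(s + a), τ u) :=
          (innerSL ℝ D).intervalIntegral_comp_comm (hτi s (s + a))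
      _ = ‖D‖ ^ 2 := by rw [innerSL_apply_apply, ← hΔ, real_inner_self_eq_norm_sq]
  -- rewrite integrand
  have hnorm : ∀ u v : ℝ, ‖τ u - τ v‖ ^ 2 = 2 - 2 * (inner ℝ (τ u) (τ v) : ℝ) := by
    intro u v
    rw [norm_sub_sq_real, hunit, hunit]
    ring
  have hinner_cont : Continuous fun p : ℝ × ℝ => (inner ℝ (τ p.1) (τ p.2) : ℝ) :=
    continuous_inner.comp ((hτc.comp continuous_fst).prodMk (hτc.comp continuous_snd))
  have inner_integral : ∀ u : ℝ,
      (∫ v in s..(s + a), ‖τ u - τ v‖ ^ 2) = 2 * a - 2 * (inner ℝ (τ u) D : ℝ) := by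
    intro u
    simp_rw [hnorm u]
    rw [intervalIntegral.integral_sub intervalIntegrable_const
      ((continuous_const.mul (continuous_const.inner hτc)).intervalIntegrable s (s + a)),
      intervalIntegral.integral_const, intervalIntegral.integral_const_mul, key]
    simp
    ring
  have hmain : (∫ u in s..(s + a), ∫ v in s..(s + a), ‖τ u - τ v‖ ^ 2)
      = 2 * (a ^ 2 - ‖D‖ ^ 2) := by
    simp_rw [inner_integral]
    rw [intervalIntegral.integral_sub intervalIntegrable_const
      ((continuous_const.mul (hτc.inner continuous_const)).intervalIntegrable s (s + a)),
      intervalIntegral.integral_const, intervalIntegral.integral_const_mul, key2]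
    simp
    ring
  constructor
  · rw [hmain]; ring
  · rcases eq_or_ne (‖D‖ ^ 2) 0 with h | h
    · rw [h]; simp [hmain]
    · rw [hmain]
      apply le_of_eq
      have h' : ‖D‖ ≠ 0 := fun h0 => h (by simp [h0])
      field_simp
end

section
/- Invariance of 𝒞 under inversion: if I(x) = x/‖x‖² is the inversion in the unit sphere and f is a C¹ curve avoiding the origin, then 𝒞(I∘f)(θ1,θ2) = 𝒞(f)(θ1,θ2), where 𝒞(f) = ‖ḟ(θ1)‖·‖ḟ(θ2)‖/‖f(θ1)−f(θ2)‖². This uses ‖I(x)−I(y)‖ = ‖x−y‖/(‖x‖·‖y‖) and ‖D I(x) v‖ = ‖v‖/‖x‖². -/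
open scoped RealInnerProductSpace

section Aux

variable {E : Type*} [NormedAddCommGroup E] [InnerProductSpace ℝ E]

lemma aux_inv_dist (x y : E) (hx : x ≠ 0) (hy : y ≠ 0) :
    ‖(‖x‖ ^ 2)⁻¹ • x - (‖y‖ ^ 2)⁻¹ • y‖ ^ 2 = ‖x - y‖ ^ 2 / (‖x‖ ^ 2 * ‖y‖ ^ 2) := by
  have hx' : ‖x‖ ≠ 0 := norm_ne_zero_iff.mpr hx
  have hy' : ‖y‖ ≠ 0 := norm_ne_zero_iff.mpr hy
  rw [@norm_sub_sq_real, @norm_sub_sq_real, real_inner_smul_left, real_inner_smul_right,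
    norm_smul, norm_smul]
  simp only [norm_inv, norm_pow, norm_norm, mul_pow]
  field_simp
  ring

lemma aux_deriv_norm (x v : E) (hx : x ≠ 0) :
    ‖(‖x‖ ^ 2)⁻¹ • v + (-(2 * ⟪x, v⟫) / (‖x‖ ^ 2) ^ 2) • x‖ = ‖v‖ / ‖x‖ ^ 2 := by
  have hx' : ‖x‖ ≠ 0 := norm_ne_zero_iff.mpr hx
  have h2 : (0:ℝ) ≤ ‖v‖ / ‖x‖ ^ 2 := by positivity
  have hsq :
      ‖(‖x‖ ^ 2)⁻¹ • v + (-(2 * ⟪x, v⟫) / (‖x‖ ^ 2) ^ 2) • x‖ ^ 2 = (‖v‖ / ‖x‖ ^ 2) ^ 2 := by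
    rw [@norm_add_sq_real, real_inner_smul_left, real_inner_smul_right,
      norm_smul, norm_smul, real_inner_comm]
    simp only [norm_inv, norm_pow, norm_norm, mul_pow, norm_div, Real.norm_eq_abs, div_pow,
      sq_abs, norm_neg]
    field_simp
    ring
  rw [← abs_of_nonneg (norm_nonneg ((‖x‖ ^ 2)⁻¹ • v + (-(2 * ⟪x, v⟫) / (‖x‖ ^ 2) ^ 2) • x)),
    ← abs_of_nonneg h2, ← Real.sqrt_sq_eq_abs, ← Real.sqrt_sq_eq_abs, hsq]

end Aux

/-- The density `𝒞(f) = ‖ḟ(θ1)‖‖ḟ(θ2)‖/‖f(θ1)−f(θ2)‖²` is invariant under the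
inversion `I(x) = x/‖x‖²` in the unit sphere, for curves avoiding the origin. -/
theorem stmt_15 {n : ℕ} (f : ℝ → EuclideanSpace ℝ (Fin n))
    (hf : Differentiable ℝ f) (h0 : ∀ θ, f θ ≠ 0) (himm : ∀ θ, deriv f θ ≠ 0)
    (θ1 θ2 : ℝ) (hne : f θ1 ≠ f θ2) :
    ‖deriv (fun θ => (‖f θ‖ ^ 2)⁻¹ • f θ) θ1‖
        * ‖deriv (fun θ => (‖f θ‖ ^ 2)⁻¹ • f θ) θ2‖
        / ‖(‖f θ1‖ ^ 2)⁻¹ • f θ1 - (‖f θ2‖ ^ 2)⁻¹ • f θ2‖ ^ 2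
      = ‖deriv f θ1‖ * ‖deriv f θ2‖ / ‖f θ1 - f θ2‖ ^ 2 := by
  have key : ∀ θ, ‖deriv (fun θ => (‖f θ‖ ^ 2)⁻¹ • f θ) θ‖ = ‖deriv f θ‖ / ‖f θ‖ ^ 2 := by
    intro θ
    have hd : HasDerivAt f (deriv f θ) θ := (hf θ).hasDerivAt
    have hns : HasDerivAt (fun t => ‖f t‖ ^ 2) (2 * ⟪f θ, deriv f θ⟫) θ := by
      have := (hd.inner ℝ hd)
      simp only [real_inner_self_eq_norm_sq] at this
      rw [real_inner_comm (f θ) (deriv f θ), ← two_mul] at this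
      exact this
    have hr : (‖f θ‖ ^ 2) ≠ 0 := by
      have := norm_ne_zero_iff.mpr (h0 θ); positivity
    have hinv := hns.inv hr
    have := hinv.smul hd
    rw [show (fun θ => (‖f θ‖ ^ 2)⁻¹ • f θ) = (fun t => ‖f t‖ ^ 2)⁻¹ • f from rfl, this.deriv]
    exact aux_deriv_norm _ _ (h0 θ)
  rw [key, key]
  have h1 : ‖f θ1‖ ≠ 0 := norm_ne_zero_iff.mpr (h0 θ1)
  have h2 : ‖f θ2‖ ≠ 0 := norm_ne_zero_iff.mpr (h0 θ2)
  have h3 : ‖f θ1 - f θ2‖ ≠ 0 := by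
    rw [norm_ne_zero_iff]; exact sub_ne_zero.mpr hne
  rw [aux_inv_dist _ _ (h0 θ1) (h0 θ2)]
  field_simp
end

section
/- For a C² immersed curve f (general parametrization) with f(θ1) ≠ f(θ2), the cosine of the conformal angle satisfies cos φ = −(1/(2𝒞(f)))·∂²/(∂θ1∂θ2) log 𝒞(f), where cos φ = (‖Δf‖²/(2‖ḟ(θ1)‖‖ḟ(θ2)‖))·∂²/(∂θ1∂θ2) log‖Δf‖² and 𝒞(f) = ‖ḟ(θ1)‖‖ḟ(θ2)‖/‖Δf‖². -/
/-- For a `C²` immersed curve, the cosine of the conformal angle satisfies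
`cos φ = −(1/(2𝒞(f)))·∂²/(∂θ1∂θ2) log 𝒞(f)`. -/
theorem stmt_16 {n : ℕ} (f : ℝ → EuclideanSpace ℝ (Fin n))
    (hf : ContDiff ℝ 2 f) (himm : ∀ θ, deriv f θ ≠ 0)
    (θ1 θ2 : ℝ) (hne : f θ1 ≠ f θ2) :
    (‖f θ1 - f θ2‖ ^ 2 / (2 * ‖deriv f θ1‖ * ‖deriv f θ2‖)) *
        deriv (fun a => deriv (fun b => Real.log (‖f a - f b‖ ^ 2)) θ2) θ1
      = -(1 / (2 * (‖deriv f θ1‖ * ‖deriv f θ2‖ / ‖f θ1 - f θ2‖ ^ 2))) *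
          deriv (fun a => deriv (fun b =>
            Real.log (‖deriv f a‖ * ‖deriv f b‖ / ‖f a - f b‖ ^ 2)) θ2) θ1 := by
  have hfd : Differentiable ℝ f := hf.differentiable (by norm_num)
  have hdf : ContDiff ℝ 1 (deriv f) := by
    have := (contDiff_succ_iff_deriv (n := 1)).mp (by exact_mod_cast hf)
    exact this.2.2
  -- neighborhood where f a ≠ f b
  have hcont : Continuous fun p : ℝ × ℝ => f p.1 - f p.2 :=
    (hfd.continuous.comp continuous_fst).sub (hfd.continuous.comp continuous_snd)
  have hopen : IsOpen {p : ℝ × ℝ | f p.1 - f p.2 ≠ 0} :=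
    isOpen_compl_singleton.preimage hcont
  have hmem : {p : ℝ × ℝ | f p.1 - f p.2 ≠ 0} ∈ nhds (θ1, θ2) :=
    hopen.mem_nhds (sub_ne_zero.mpr hne)
  rw [nhds_prod_eq] at hmem
  obtain ⟨s, hs, t, ht, hst⟩ := Filter.mem_prod_iff.mp hmem
  -- differentiability of log ‖deriv f b‖ at θ2
  have d1 : DifferentiableAt ℝ (fun b => Real.log ‖deriv f b‖) θ2 := by
    refine DifferentiableAt.log ?_ (norm_ne_zero_iff.mpr (himm θ2))
    exact ((hdf.differentiable (by norm_num)) θ2).norm ℝ (himm θ2)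
  -- key: inner derivative splits, for a near θ1
  have key : ∀ a ∈ s,
      deriv (fun b => Real.log (‖deriv f a‖ * ‖deriv f b‖ / ‖f a - f b‖ ^ 2)) θ2
        = deriv (fun b => Real.log ‖deriv f b‖) θ2
          - deriv (fun b => Real.log (‖f a - f b‖ ^ 2)) θ2 := by
    intro a ha
    have hab : ∀ b ∈ t, f a - f b ≠ 0 := fun b hb => hst (Set.mk_mem_prod ha hb)
    have heq : (fun b => Real.log (‖deriv f a‖ * ‖deriv f b‖ / ‖f a - f b‖ ^ 2))
        =ᶠ[nhds θ2] fun b => Real.log ‖deriv f a‖ +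
          (Real.log ‖deriv f b‖ - Real.log (‖f a - f b‖ ^ 2)) := by
      filter_upwards [ht] with b hb
      have h1 : ‖deriv f a‖ ≠ 0 := norm_ne_zero_iff.mpr (himm a)
      have h2 : ‖deriv f b‖ ≠ 0 := norm_ne_zero_iff.mpr (himm b)
      have h3 : ‖f a - f b‖ ^ 2 ≠ 0 := pow_ne_zero _ (norm_ne_zero_iff.mpr (hab b hb))
      rw [Real.log_div (mul_ne_zero h1 h2) h3, Real.log_mul h1 h2]
      ring
    rw [heq.deriv_eq, deriv_const_add]
    have hΔ : f a - f θ2 ≠ 0 := hab θ2 (mem_of_mem_nhds ht)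
    have d2 : DifferentiableAt ℝ (fun b => Real.log (‖f a - f b‖ ^ 2)) θ2 := by
      refine DifferentiableAt.log ?_ (pow_ne_zero _ (norm_ne_zero_iff.mpr hΔ))
      exact ((((differentiableAt_const (f a)).sub (hfd θ2)).norm ℝ hΔ).pow 2)
    exact deriv_sub d1 d2
  -- outer derivative
  have outer : deriv (fun a => deriv (fun b =>
      Real.log (‖deriv f a‖ * ‖deriv f b‖ / ‖f a - f b‖ ^ 2)) θ2) θ1
      = - deriv (fun a => deriv (fun b => Real.log (‖f a - f b‖ ^ 2)) θ2) θ1 := by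
    have heq : (fun a => deriv (fun b =>
        Real.log (‖deriv f a‖ * ‖deriv f b‖ / ‖f a - f b‖ ^ 2)) θ2)
        =ᶠ[nhds θ1] fun a => deriv (fun b => Real.log ‖deriv f b‖) θ2
          - deriv (fun b => Real.log (‖f a - f b‖ ^ 2)) θ2 := by
      filter_upwards [hs] with a ha using key a ha
    rw [heq.deriv_eq, deriv_const_sub]
  rw [outer]
  have h1 : ‖deriv f θ1‖ ≠ 0 := norm_ne_zero_iff.mpr (himm θ1)
  have h2 : ‖deriv f θ2‖ ≠ 0 := norm_ne_zero_iff.mpr (himm θ2)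
  have h3 : ‖f θ1 - f θ2‖ ^ 2 ≠ 0 := pow_ne_zero _ (norm_ne_zero_iff.mpr (sub_ne_zero.mpr hne))
  generalize deriv (fun a => deriv (fun b => Real.log (‖f a - f b‖ ^ 2)) θ2) θ1 = D
  field_simp
end
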